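/- If a degree vector m ∈ ℤ^r yields a pure Bézout-type complex, then there exists a permutation π of {1,…,r} such that m_i ≥ m^π_i for all i = 1,…,r, where m^π_k = −l_k + d_k·Σ_{j : π(j) ≥ π(k)} l_j. -/

import Mathlib

open Finset

/-- `n = l₁ + ⋯ + l_r`, as an integer. -/
def nDim {r : ℕ} (l : Fin r → ℕ) : ℤ := ∑ k, (l k : ℤ)

/-- The defect vector: `δ_k = l_k − ⌈l_k / d_k⌉`. -/
def defect {r : ℕ} (l d : Fin r → ℕ) (k : Fin r) : ℤ :=
  (l k : ℤ) - ⌈(l k : ℚ) / (d k : ℚ)⌉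

/-- `P_k(m) = {p ∈ ℤ : m_k/d_k < p ≤ (m_k + l_k)/d_k}`. -/
def Pset {r : ℕ} (l d : Fin r → ℕ) (m : Fin r → ℤ) (k : Fin r) : Set ℤ :=
  {p : ℤ | (m k : ℚ) / (d k : ℚ) < (p : ℚ) ∧
    (p : ℚ) ≤ ((m k : ℚ) + (l k : ℚ)) / (d k : ℚ)}

/-- The `(p,J)`-summand of `m` is nonzero: `m_k − p d_k ≤ −l_k − 1` for `k ∈ J`
and `m_k − p d_k ≥ 0` for `k ∉ J`. -/
def SummandNonzero {r : ℕ} (l d : Fin r → ℕ) (m : Fin r → ℤ) (p : ℤ)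
    (J : Finset (Fin r)) : Prop :=
  (∀ k ∈ J, m k - p * d k ≤ -(l k : ℤ) - 1) ∧ ∀ k ∉ J, 0 ≤ m k - p * d k

/-- `K_ν(m) = 0`: every `(p,J)`-summand with `p ∈ {0,…,n+1}` and
`p − Σ_{k∈J} l_k = ν` is zero. -/
def Kvanish {r : ℕ} (l d : Fin r → ℕ) (m : Fin r → ℤ) (ν : ℤ) : Prop :=
  ∀ p : ℤ, 0 ≤ p → p ≤ nDim l + 1 →
    ∀ J : Finset (Fin r), p - ∑ k ∈ J, (l k : ℤ) = ν → ¬ SummandNonzero l d m p J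

/-- `m` is determinantal iff `K_{-1}(m) = 0` and `K_2(m) = 0`. -/
def Determinantal {r : ℕ} (l d : Fin r → ℕ) (m : Fin r → ℤ) : Prop :=
  Kvanish l d m (-1) ∧ Kvanish l d m 2

open scoped Classical in
/-- The dimension of the `(p,J)`-summand of `m`. -/
noncomputable def dimSummand {r : ℕ} (l d : Fin r → ℕ) (m : Fin r → ℤ) (p : ℤ)
    (J : Finset (Fin r)) : ℕ :=
  if SummandNonzero l d m p J then
    (∏ k ∈ J, (p * d k - m k - 1).toNat.choose (l k)) *
      ∏ k ∈ Jᶜ, (m k - p * d k + l k).toNat.choose (l k)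
  else 0

open scoped Classical in
/-- `dim K_ν(m)`. -/
noncomputable def dimK {r : ℕ} (l d : Fin r → ℕ) (m : Fin r → ℤ) (ν : ℤ) : ℕ :=
  ∑ p ∈ Finset.range ((∑ k, l k) + 2),
    ((∑ k, l k) + 1).choose p *
      ∑ J ∈ Finset.univ.filter
          (fun J : Finset (Fin r) => (p : ℤ) - ∑ k ∈ J, (l k : ℤ) = ν),
        dimSummand l d m (p : ℤ) J

/-- `m′`: agrees with `m` except `m′_k = m_k + d_k − [m_k]_k − 1`. -/
def mprime {r : ℕ} (d : Fin r → ℕ) (m : Fin r → ℤ) (k : Fin r) : Fin r → ℤ :=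
  Function.update m k (m k + d k - m k % (d k : ℤ) - 1)

/-- `m″`: agrees with `m` except `m″_k = m_k − [m_k + l_k]_k`. -/
def msecond {r : ℕ} (l d : Fin r → ℕ) (m : Fin r → ℤ) (k : Fin r) : Fin r → ℤ :=
  Function.update m k (m k - (m k + l k) % (d k : ℤ))

/-- The critical degree vector `ρ_k = (n+1) d_k − l_k − 1`. -/
def critical {r : ℕ} (l d : Fin r → ℕ) (k : Fin r) : ℤ :=
  (nDim l + 1) * d k - l k - 1

/-- `m` yields a pure Sylvester-type matrix. -/
def PureSylvester {r : ℕ} (l d : Fin r → ℕ) (m : Fin r → ℤ) : Prop :=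
  (∀ k, 0 ≤ m k) ∧ (∀ k, (d k : ℤ) ≤ m k) ∧ Kvanish l d m (-1) ∧
  ∀ ν : ℤ, (ν = 0 ∨ ν = 1) →
    ∀ p : ℤ, 0 ≤ p → p ≤ nDim l + 1 → ∀ J : Finset (Fin r), J ≠ ∅ →
      p - ∑ k ∈ J, (l k : ℤ) = ν → ¬ SummandNonzero l d m p J

/-- `m` yields a pure Bézout-type complex. -/
def PureBezout {r : ℕ} (l d : Fin r → ℕ) (m : Fin r → ℤ) : Prop :=
  Kvanish l d m (-1) ∧
  SummandNonzero l d m 0 ∅ ∧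
  (∀ p : ℤ, 0 ≤ p → p ≤ nDim l + 1 → ∀ J : Finset (Fin r), J ≠ ∅ →
      p - ∑ k ∈ J, (l k : ℤ) = 0 → ¬ SummandNonzero l d m p J) ∧
  SummandNonzero l d m (nDim l + 1) Finset.univ ∧
  (∀ p : ℤ, 0 ≤ p → p ≤ nDim l + 1 → ∀ J : Finset (Fin r),
      ¬(p = nDim l + 1 ∧ J = Finset.univ) →
      p - ∑ k ∈ J, (l k : ℤ) = 1 → ¬ SummandNonzero l d m p J)

/-- The Sylvester degree vector `m^π_k = (1 + Σ_{π(j) ≥ π(k)} l_j) d_k − l_k`. -/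
def mSyl {r : ℕ} (l d : Fin r → ℕ) (π : Equiv.Perm (Fin r)) (k : Fin r) : ℤ :=
  (1 + ∑ j ∈ Finset.univ.filter (fun j => π k ≤ π j), (l j : ℤ)) * d k - l k

/-- The Bézout degree vector `m^π_k = −l_k + d_k Σ_{π(j) ≥ π(k)} l_j`. -/
def mBez {r : ℕ} (l d : Fin r → ℕ) (π : Equiv.Perm (Fin r)) (k : Fin r) : ℤ :=
  -(l k : ℤ) + (d k : ℤ) * ∑ j ∈ Finset.univ.filter (fun j => π k ≤ π j), (l j : ℤ)


/-! ### Auxiliary machinery for `bezout_lower_bound` -/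

private lemma ediv_succ_le_iff {a p c : ℤ} (hc : 0 < c) : a / c + 1 ≤ p ↔ a + 1 ≤ p * c := by
  rw [Int.add_one_le_iff, Int.add_one_le_iff]
  exact Int.ediv_lt_iff_lt_mul hc

/-- `S k`: least `p` with `m k - p * d k ≤ -l k - 1`. -/
private def SvD {r : ℕ} (l d : Fin r → ℕ) (m : Fin r → ℤ) (k : Fin r) : ℤ :=
  (m k + l k) / (d k : ℤ) + 1

/-- `T k`: greatest `p` with `0 ≤ m k - p * d k`. -/
private def TvD {r : ℕ} (d : Fin r → ℕ) (m : Fin r → ℤ) (k : Fin r) : ℤ :=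
  m k / (d k : ℤ)

/-- `φ(q) = q - Σ_{S k ≤ q} l k`. -/
private def phiD {r : ℕ} (l d : Fin r → ℕ) (m : Fin r → ℤ) (q : ℤ) : ℤ :=
  q - ∑ k ∈ Finset.univ.filter (fun k => SvD l d m k ≤ q), (l k : ℤ)

/-- No coordinate is "in between" at `p`. -/
private def GoodD {r : ℕ} (l d : Fin r → ℕ) (m : Fin r → ℤ) (p : ℤ) : Prop :=
  ∀ k, TvD d m k < p → SvD l d m k ≤ p

/-- If `m` yields a pure Bézout-type complex, then `m ≥ m^π` coordinatewise for some
permutation `π`, where `m^π_k = −l_k + d_k Σ_{π(j) ≥ π(k)} l_j`. -/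
theorem bezout_lower_bound (r : ℕ) (hr : 0 < r) (l d : Fin r → ℕ) (hl : ∀ k, 0 < l k) (hd : ∀ k, 0 < d k)
    (m : Fin r → ℤ) (hB : PureBezout l d m) :
    ∃ π : Equiv.Perm (Fin r), ∀ i, mBez l d π i ≤ m i := by
  classical
  have hdZ : ∀ k, (0:ℤ) < (d k : ℤ) := fun k => by exact_mod_cast hd k
  -- the window of each coordinate has length at most `l k`
  have hwin : ∀ k, SvD l d m k - TvD d m k ≤ (l k : ℤ) + 1 := by
    intro k
    have h0 : (m k + (l k : ℤ)) / (d k : ℤ) ≤ (m k + (l k : ℤ) * (d k : ℤ)) / (d k : ℤ) := by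
      refine Int.ediv_le_ediv (hdZ k) ?_
      have h1 : (l k : ℤ) ≤ (l k : ℤ) * (d k : ℤ) :=
        le_mul_of_one_le_right (by positivity) (by have := hdZ k; linarith)
      linarith
    have h2 : (m k + (l k : ℤ) * (d k : ℤ)) / (d k : ℤ) = m k / (d k : ℤ) + (l k : ℤ) :=
      Int.add_mul_ediv_right _ _ (hdZ k).ne'
    unfold SvD TvD
    linarith [h0, h2.le, h2.ge]
  -- all `S k ≤ n + 1`
  have hStop : ∀ k, SvD l d m k ≤ nDim l + 1 := by
    intro k
    have h := hB.2.2.2.1.1 k (Finset.mem_univ k)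
    unfold SvD
    rw [ediv_succ_le_iff (hdZ k)]
    linarith
  have hphitop : phiD l d m (nDim l + 1) = 1 := by
    unfold phiD
    rw [Finset.filter_true_of_mem (fun k _ => hStop k)]
    unfold nDim
    ring
  -- the vanishing of `K_0` forbids `φ(q) = 0` at good points `q ∈ [1, n]`
  have good_phi_ne : ∀ q : ℤ, 1 ≤ q → q ≤ nDim l → GoodD l d m q → phiD l d m q ≠ 0 := by
    intro q h1 h2 hg h0
    have hJne : Finset.univ.filter (fun k => SvD l d m k ≤ q) ≠ ∅ := by
      intro hJ
      unfold phiD at h0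
      rw [hJ, Finset.sum_empty] at h0
      omega
    have hsum : q - ∑ k ∈ Finset.univ.filter (fun k => SvD l d m k ≤ q), (l k : ℤ) = 0 := h0
    refine hB.2.2.1 q (by linarith) (by linarith)
      (Finset.univ.filter (fun k => SvD l d m k ≤ q)) hJne hsum ⟨?_, ?_⟩
    · intro k hk
      rw [Finset.mem_filter] at hk
      have hk2 := hk.2
      unfold SvD at hk2
      have := (ediv_succ_le_iff (hdZ k)).1 hk2
      linarith
    · intro k hk
      rw [Finset.mem_filter] at hk
      push_neg at hk
      have hknot : ¬ SvD l d m k ≤ q := by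
        have := hk (Finset.mem_univ k)
        omega
      have hTle : q ≤ TvD d m k := by
        by_contra hc
        push_neg at hc
        exact hknot (hg k hc)
      unfold TvD at hTle
      have := (Int.le_ediv_iff_mul_le (hdZ k)).1 hTle
      linarith
  -- core downward step
  have core : ∀ q : ℤ, 1 ≤ q → q ≤ nDim l →
      1 ≤ phiD l d m (q + 1) →
      (∀ q' : ℤ, q < q' → q' ≤ nDim l → 1 ≤ phiD l d m q') →
      1 ≤ phiD l d m q := by
    intro q h1 h2 hnext hup
    by_contra hcon
    push_neg at hcon
    have hmass : 0 ≤ ∑ k ∈ Finset.univ.filter (fun k => SvD l d m k = q + 1), (l k : ℤ) :=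
      Finset.sum_nonneg fun k _ => by positivity
    have hstep : phiD l d m (q + 1) = phiD l d m q + 1 -
        ∑ k ∈ Finset.univ.filter (fun k => SvD l d m k = q + 1), (l k : ℤ) := by
      have hsp : Finset.univ.filter (fun k => SvD l d m k ≤ q + 1) =
          Finset.univ.filter (fun k => SvD l d m k ≤ q) ∪
            Finset.univ.filter (fun k => SvD l d m k = q + 1) := by
        ext k
        simp only [Finset.mem_filter, Finset.mem_union, Finset.mem_univ, true_and]
        omega
      have hdj : Disjoint (Finset.univ.filter (fun k => SvD l d m k ≤ q))
          (Finset.univ.filter (fun k => SvD l d m k = q + 1)) := by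
        rw [Finset.disjoint_left]
        intro k hk1 hk2
        simp only [Finset.mem_filter, Finset.mem_univ, true_and] at hk1 hk2
        omega
      unfold phiD
      rw [hsp, Finset.sum_union hdj]
      ring
    have hphi0 : phiD l d m q = 0 := by linarith
    have hbadq : ¬ GoodD l d m q := fun hg => good_phi_ne q h1 h2 hg hphi0
    -- the first good point `Q` above `q`
    have hEne : ((Finset.Icc q (nDim l + 1)).filter (fun p => GoodD l d m p)).Nonempty := by
      refine ⟨nDim l + 1, ?_⟩
      rw [Finset.mem_filter, Finset.mem_Icc]
      exact ⟨⟨by omega, le_refl _⟩, fun k _ => hStop k⟩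
    obtain ⟨Q, hQE, hQmin⟩ :
        ∃ Q, Q ∈ (Finset.Icc q (nDim l + 1)).filter (fun p => GoodD l d m p) ∧
          ∀ p ∈ (Finset.Icc q (nDim l + 1)).filter (fun p => GoodD l d m p), Q ≤ p :=
      ⟨_, Finset.min'_mem _ hEne, fun p hp => Finset.min'_le _ p hp⟩
    rw [Finset.mem_filter, Finset.mem_Icc] at hQE
    obtain ⟨⟨hqQ', hQtop⟩, hQgood⟩ := hQE
    have hqQ : q < Q := by
      rcases lt_or_eq_of_le hqQ' with h | h
      · exact h
      · exact absurd (h ▸ hQgood) hbadq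
    have hbadrun : ∀ p : ℤ, q ≤ p → p < Q → ¬ GoodD l d m p := by
      intro p hp1 hp2 hgood
      have hpE : p ∈ (Finset.Icc q (nDim l + 1)).filter (fun p => GoodD l d m p) := by
        rw [Finset.mem_filter, Finset.mem_Icc]
        exact ⟨⟨hp1, by omega⟩, hgood⟩
      have := hQmin p hpE
      omega
    -- choose an in-between coordinate covering each bad point
    have hex : ∀ p : ℤ, ∃ k : Fin r,
        q ≤ p → p ≤ Q - 1 → (TvD d m k < p ∧ p < SvD l d m k) := by
      intro p
      by_cases hp : q ≤ p ∧ p ≤ Q - 1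
      · have hbad := hbadrun p hp.1 (by omega)
        unfold GoodD at hbad
        push_neg at hbad
        obtain ⟨k, hk1, hk2⟩ := hbad
        exact ⟨k, fun _ _ => ⟨hk1, hk2⟩⟩
      · exact ⟨⟨0, hr⟩, fun ha hb => absurd ⟨ha, hb⟩ hp⟩
    choose f hf using hex
    have hmaps : ∀ p ∈ Finset.Icc q (Q - 1),
        f p ∈ Finset.univ.filter (fun k => q < SvD l d m k ∧ SvD l d m k ≤ Q) := by
      intro p hp
      rw [Finset.mem_Icc] at hp
      obtain ⟨hT, hS⟩ := hf p hp.1 hp.2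
      rw [Finset.mem_filter]
      refine ⟨Finset.mem_univ _, by omega, hQgood (f p) (by omega)⟩
    have hcard := Finset.card_eq_sum_card_fiberwise hmaps
    have hfib : ∀ k ∈ Finset.univ.filter (fun k => q < SvD l d m k ∧ SvD l d m k ≤ Q),
        (Finset.filter (fun p => f p = k) (Finset.Icc q (Q - 1))).card ≤ l k := by
      intro k _
      have hsub : Finset.filter (fun p => f p = k) (Finset.Icc q (Q - 1)) ⊆
          Finset.Icc (TvD d m k + 1) (SvD l d m k - 1) := by
        intro p hp
        rw [Finset.mem_filter, Finset.mem_Icc] at hp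
        obtain ⟨⟨hp1, hp2⟩, hpk⟩ := hp
        have hprop := hf p hp1 hp2
        rw [hpk] at hprop
        rw [Finset.mem_Icc]
        omega
      calc (Finset.filter (fun p => f p = k) (Finset.Icc q (Q - 1))).card
          ≤ (Finset.Icc (TvD d m k + 1) (SvD l d m k - 1)).card := Finset.card_le_card hsub
        _ ≤ l k := by
            rw [Int.card_Icc]
            have := hwin k
            omega
    have hVcard : Q - q ≤
        ∑ k ∈ Finset.univ.filter (fun k => q < SvD l d m k ∧ SvD l d m k ≤ Q), (l k : ℤ) := by
      have h1 : (Finset.Icc q (Q - 1)).card ≤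
          ∑ k ∈ Finset.univ.filter (fun k => q < SvD l d m k ∧ SvD l d m k ≤ Q), l k := by
        rw [hcard]
        exact Finset.sum_le_sum hfib
      have h2 : (Finset.Icc q (Q - 1)).card = (Q - q).toNat := by
        rw [Int.card_Icc]
        congr 1
        ring
      rw [h2] at h1
      have h3 := (Nat.cast_le (α := ℤ)).2 h1
      push_cast at h3
      have h4 : Q - q ≤ ((Q - q).toNat : ℤ) := Int.self_le_toNat _
      linarith
    -- conclude `φ(Q) ≤ 0`
    have hsq : ∑ k ∈ Finset.univ.filter (fun k => SvD l d m k ≤ q), (l k : ℤ) = q := by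
      unfold phiD at hphi0
      linarith
    have hsp : Finset.univ.filter (fun k => SvD l d m k ≤ Q) =
        Finset.univ.filter (fun k => SvD l d m k ≤ q) ∪
          Finset.univ.filter (fun k => q < SvD l d m k ∧ SvD l d m k ≤ Q) := by
      ext k
      simp only [Finset.mem_filter, Finset.mem_union, Finset.mem_univ, true_and]
      omega
    have hdj : Disjoint (Finset.univ.filter (fun k => SvD l d m k ≤ q))
        (Finset.univ.filter (fun k => q < SvD l d m k ∧ SvD l d m k ≤ Q)) := by
      rw [Finset.disjoint_left]
      intro k hk1 hk2
      rw [Finset.mem_filter] at hk1 hk2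
      omega
    have hphiQ : phiD l d m Q ≤ 0 := by
      unfold phiD
      rw [hsp, Finset.sum_union hdj, hsq]
      linarith
    rcases eq_or_lt_of_le hQtop with hEq | hLt
    · rw [hEq, hphitop] at hphiQ
      norm_num at hphiQ
    · have := hup Q hqQ (by omega)
      linarith
  -- downward induction
  have Gaux : ∀ j : ℕ, ∀ q : ℤ, 1 ≤ q → q ≤ nDim l → nDim l ≤ q + j → 1 ≤ phiD l d m q := by
    intro j
    induction j with
    | zero =>
      intro q h1 h2 h3
      have hq : q = nDim l := by omega
      refine core q h1 h2 ?_ ?_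
      · rw [hq]
        exact le_of_eq hphitop.symm
      · intro q' hq1 hq2
        exact absurd hq2 (by omega)
    | succ j ih =>
      intro q h1 h2 h3
      by_cases hc : nDim l ≤ q + j
      · exact ih q h1 h2 hc
      · refine core q h1 h2 ?_ ?_
        · exact ih (q + 1) (by omega) (by omega) (by omega)
        · intro q' hq1 hq2
          exact ih q' (by omega) hq2 (by omega)
  have G : ∀ q : ℤ, 1 ≤ q → q ≤ nDim l → 1 ≤ phiD l d m q := fun q h1 h2 =>
    Gaux (nDim l - q).toNat q h1 h2 (by omega)
  -- build the permutation by sorting `S` in decreasing order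
  obtain ⟨π, hπmono⟩ : ∃ π : Equiv.Perm (Fin r),
      ∀ i j : Fin r, π i ≤ π j → SvD l d m j ≤ SvD l d m i := by
    refine ⟨(Tuple.sort (fun k => -SvD l d m k))⁻¹, fun i j hij => ?_⟩
    have hm := Tuple.monotone_sort (fun k => -SvD l d m k) hij
    simp only [Function.comp_apply, Equiv.Perm.inv_def, Equiv.apply_symm_apply] at hm
    linarith
  refine ⟨π, fun i => ?_⟩
  set A := Finset.univ.filter (fun j => π i ≤ π j) with hA
  have hiA : i ∈ A := by
    rw [hA, Finset.mem_filter]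
    exact ⟨Finset.mem_univ _, le_refl _⟩
  have hW1 : (1:ℤ) ≤ ∑ j ∈ A, (l j : ℤ) := by
    have h1 : (l i : ℤ) ≤ ∑ j ∈ A, (l j : ℤ) :=
      Finset.single_le_sum (f := fun j => (l j : ℤ)) (fun j _ => by positivity) hiA
    have h2 : (1:ℤ) ≤ (l i : ℤ) := by exact_mod_cast hl i
    linarith
  have hWN : ∑ j ∈ A, (l j : ℤ) ≤ nDim l := by
    unfold nDim
    exact Finset.sum_le_sum_of_subset_of_nonneg (Finset.subset_univ A)
      (fun j _ _ => by positivity)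
  have hSi : ∑ j ∈ A, (l j : ℤ) + 1 ≤ SvD l d m i := by
    by_contra hcon
    push_neg at hcon
    have hG := G (∑ j ∈ A, (l j : ℤ)) hW1 hWN
    unfold phiD at hG
    have hsub : A ⊆ Finset.univ.filter (fun k => SvD l d m k ≤ ∑ j ∈ A, (l j : ℤ)) := by
      intro j hj
      rw [Finset.mem_filter]
      refine ⟨Finset.mem_univ _, ?_⟩
      have hj' : π i ≤ π j := by
        rw [hA, Finset.mem_filter] at hj
        exact hj.2
      have := hπmono i j hj'
      omega
    have hge : ∑ j ∈ A, (l j : ℤ) ≤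
        ∑ k ∈ Finset.univ.filter (fun k => SvD l d m k ≤ ∑ j ∈ A, (l j : ℤ)), (l k : ℤ) :=
      Finset.sum_le_sum_of_subset_of_nonneg hsub (fun j _ _ => by positivity)
    linarith
  have hdiv : ∑ j ∈ A, (l j : ℤ) ≤ (m i + l i) / (d i : ℤ) := by
    unfold SvD at hSi
    linarith
  have hfin := (Int.le_ediv_iff_mul_le (hdZ i)).1 hdiv
  rw [mul_comm] at hfin
  unfold mBez
  rw [← hA]
  linarith
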